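/- arXiv:1806.06751 — 3 statements merged into one kernel-verified Lean document; each statement's English description precedes it below -/
import Mathlib

section
/- For every natural number p and every integer n ≥ 1, Tr[A_{p+1}^n · A_{p+1}^T] = (n+2) · Tr[A_p^n · A_p^T]. -/
open Matrix

/-- Index type for the recursively defined block matrices `A p`,
of cardinality `2 ^ p`. -/
def IdxA : ℕ → Type
  | 0 => Fin 1
  | p + 1 => IdxA p ⊕ IdxA p

instance instFintypeIdxA : ∀ p, Fintype (IdxA p)
  | 0 => inferInstanceAs (Fintype (Fin 1))
  | p + 1 => letI := instFintypeIdxA p; inferInstanceAs (Fintype (IdxA p ⊕ IdxA p))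

instance instDecidableEqIdxA : ∀ p, DecidableEq (IdxA p)
  | 0 => inferInstanceAs (DecidableEq (Fin 1))
  | p + 1 => letI := instDecidableEqIdxA p; inferInstanceAs (DecidableEq (IdxA p ⊕ IdxA p))

/-- `A 0` is the 1×1 matrix with single entry 1, and
`A (p+1) = [[A p, (A p)ᵀ], [0, A p]]` as a 2×2 block matrix. -/
def A : (p : ℕ) → Matrix (IdxA p) (IdxA p) ℤ
  | 0 => Matrix.of fun _ _ => (1 : ℤ)
  | p + 1 => Matrix.fromBlocks (A p) (A p)ᵀ 0 (A p)

lemma A_succ (p : ℕ) : A (p + 1) = Matrix.fromBlocks (A p) (A p)ᵀ 0 (A p) := rfl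

lemma trace_fromBlocks' {m n : Type*} [Fintype m] [Fintype n]
    (B : Matrix m m ℤ) (C : Matrix m n ℤ) (D : Matrix n m ℤ) (E : Matrix n n ℤ) :
    (Matrix.fromBlocks B C D E).trace = B.trace + E.trace := by
  simp [Matrix.trace, Matrix.diag, Fintype.sum_sum_type, Matrix.fromBlocks]

lemma pow_A_succ (p n : ℕ) :
    (A (p + 1)) ^ n
      = Matrix.fromBlocks ((A p) ^ n)
          (∑ k ∈ Finset.range n, (A p) ^ k * (A p)ᵀ * (A p) ^ (n - 1 - k))
          0 ((A p) ^ n) := by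
  induction n with
  | zero => simp [Matrix.fromBlocks_one]; rfl
  | succ n ih =>
    rw [pow_succ, ih, A_succ]; erw [Matrix.fromBlocks_multiply]
    have hsum : ∑ k ∈ Finset.range (n + 1), (A p) ^ k * (A p)ᵀ * (A p) ^ (n - k)
        = (A p) ^ n * (A p)ᵀ
          + (∑ k ∈ Finset.range n, (A p) ^ k * (A p)ᵀ * (A p) ^ (n - 1 - k)) * A p := by
      rw [Finset.sum_range_succ, Finset.sum_mul]
      have h : ∀ k ∈ Finset.range n,
          (A p) ^ k * (A p)ᵀ * (A p) ^ (n - k)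
            = (A p) ^ k * (A p)ᵀ * (A p) ^ (n - 1 - k) * A p := by
        intro k hk
        rw [Finset.mem_range] at hk
        rw [mul_assoc ((A p) ^ k * (A p)ᵀ), ← pow_succ]
        congr 2
        omega
      rw [Finset.sum_congr rfl h, Nat.sub_self, pow_zero, mul_one, add_comm]
    simp only [Nat.add_sub_cancel] at hsum ⊢
    rw [hsum]
    simp [pow_succ, add_comm]; rfl

theorem trace_pow_A_succ_mul_transpose (p n : ℕ) (hn : 1 ≤ n) :
    Matrix.trace ((A (p + 1)) ^ n * (A (p + 1))ᵀ)
      = ((n : ℤ) + 2) * Matrix.trace ((A p) ^ n * (A p)ᵀ) := by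
  rw [pow_A_succ, A_succ]; erw [Matrix.fromBlocks_transpose, Matrix.fromBlocks_multiply]
  erw [trace_fromBlocks']
  have hS : Matrix.trace
      ((∑ k ∈ Finset.range n, (A p) ^ k * (A p)ᵀ * (A p) ^ (n - 1 - k)) * (A p)ᵀᵀ)
      = (n : ℤ) * Matrix.trace ((A p) ^ n * (A p)ᵀ) := by
    rw [Matrix.transpose_transpose, Finset.sum_mul, Matrix.trace_sum]
    have h : ∀ k ∈ Finset.range n,
        Matrix.trace ((A p) ^ k * (A p)ᵀ * (A p) ^ (n - 1 - k) * A p)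
          = Matrix.trace ((A p) ^ n * (A p)ᵀ) := by
      intro k hk
      rw [Finset.mem_range] at hk
      rw [mul_assoc ((A p) ^ k * (A p)ᵀ), ← pow_succ]
      have hexp : n - 1 - k + 1 = n - k := by omega
      rw [hexp, mul_assoc, Matrix.trace_mul_comm, mul_assoc, ← pow_add]
      have : n - k + k = n := by omega
      rw [this, Matrix.trace_mul_comm]
    rw [Finset.sum_congr rfl h, Finset.sum_const, Finset.card_range, nsmul_eq_mul]
  simp only [Matrix.trace_add, hS, Matrix.transpose_zero, Matrix.mul_zero,
    Matrix.zero_mul, Matrix.trace_zero, add_zero]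
  ring
end

section
/- The sequence (Tr[B_p^2])^{1/(2p)} = (2·(2^p + 3^p))^{1/(2p)} converges to √3 as p → ∞ (the limit taken over real numbers). -/
open Matrix

/-- The symmetrized transfer matrix `B p = A p + (A p)ᵀ`. -/
def B (p : ℕ) : Matrix (IdxA p) (IdxA p) ℤ := A p + (A p)ᵀ

lemma trace_fromBlocks'_s7 {n m : Type*} [Fintype n] [Fintype m]
    (M : Matrix n n ℤ) (P : Matrix n m ℤ) (Q : Matrix m n ℤ) (N : Matrix m m ℤ) :
    (Matrix.fromBlocks M P Q N).trace = M.trace + N.trace := by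
  simp [Matrix.trace, Fintype.sum_sum_type, Matrix.fromBlocks, Matrix.diag]

lemma trace_A_sq : ∀ p, Matrix.trace ((A p) * (A p)) = 2 ^ p
  | 0 => by decide
  | p + 1 => by
    show Matrix.trace (Matrix.fromBlocks (A p) (A p)ᵀ 0 (A p) *
      Matrix.fromBlocks (A p) (A p)ᵀ 0 (A p)) = _
    rw [Matrix.fromBlocks_multiply, trace_fromBlocks'_s7]
    simp [trace_A_sq p, pow_succ]
    ring

lemma trace_A_AT : ∀ p, Matrix.trace ((A p) * (A p)ᵀ) = 3 ^ p
  | 0 => by decide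
  | p + 1 => by
    show Matrix.trace (Matrix.fromBlocks (A p) (A p)ᵀ 0 (A p) *
      (Matrix.fromBlocks (A p) (A p)ᵀ 0 (A p))ᵀ) = _
    rw [Matrix.fromBlocks_transpose, Matrix.fromBlocks_multiply, trace_fromBlocks'_s7]
    simp [trace_A_AT p, Matrix.trace_mul_comm (A p)ᵀ (A p), pow_succ]
    ring

lemma trace_B_sq (p : ℕ) : Matrix.trace ((B p) ^ 2) = 2 * (2 ^ p + 3 ^ p) := by
  rw [sq, B]
  rw [Matrix.add_mul, Matrix.mul_add, Matrix.mul_add, Matrix.trace_add, Matrix.trace_add,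
    Matrix.trace_add]
  have h1 := trace_A_sq p
  have h2 := trace_A_AT p
  have h3 : Matrix.trace ((A p)ᵀ * (A p)ᵀ) = 2 ^ p := by
    rw [← Matrix.transpose_mul, Matrix.trace_transpose, h1]
  have h4 : Matrix.trace ((A p)ᵀ * A p) = 3 ^ p := by
    rw [Matrix.trace_mul_comm, h2]
  rw [h1, h2, h3, h4]; ring

theorem trace_B_sq_root_tendsto :
    Filter.Tendsto
      (fun p : ℕ => ((Matrix.trace ((B p) ^ 2) : ℤ) : ℝ) ^ (1 / (2 * (p : ℝ))))
      Filter.atTop (nhds (Real.sqrt 3)) := by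
  have key : ∀ p : ℕ, ((Matrix.trace ((B p) ^ 2) : ℤ) : ℝ) = 2 * (2 ^ p + 3 ^ p) := by
    intro p; rw [trace_B_sq p]; push_cast; ring
  simp only [key]
  -- squeeze between √3 and 4^(1/(2p)) * √3
  have hupper : Filter.Tendsto (fun p : ℕ => (4:ℝ) ^ (1 / (2 * (p:ℝ))) * Real.sqrt 3)
      Filter.atTop (nhds (Real.sqrt 3)) := by
    have h0 : Filter.Tendsto (fun p : ℕ => 1 / (2 * (p:ℝ))) Filter.atTop (nhds 0) := by
      have := (tendsto_natCast_atTop_atTop (R := ℝ)).const_mul_atTop (by norm_num : (0:ℝ) < 2)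
      exact this.inv_tendsto_atTop.congr (fun p => (one_div _).symm)
    have hc : Filter.Tendsto (fun p : ℕ => (4:ℝ) ^ (1 / (2 * (p:ℝ)))) Filter.atTop (nhds 1) := by
      have := (Real.continuousAt_const_rpow (by norm_num : (4:ℝ) ≠ 0)).tendsto.comp h0
      simpa [Function.comp_def] using this
    simpa using hc.mul_const (Real.sqrt 3)
  refine tendsto_of_tendsto_of_tendsto_of_le_of_le' tendsto_const_nhds hupper ?_ ?_
  · filter_upwards [Filter.eventually_ge_atTop 1] with p hp
    have hppos : (0:ℝ) < (p:ℝ) := by exact_mod_cast hp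
    have hexp : (0:ℝ) ≤ 1 / (2 * (p:ℝ)) := by positivity
    have h1 : ((3:ℝ) ^ p) ^ (1 / (2 * (p:ℝ))) ≤ (2 * (2 ^ p + 3 ^ p)) ^ (1 / (2 * (p:ℝ))) := by
      apply Real.rpow_le_rpow (by positivity) _ hexp
      nlinarith [pow_pos (by norm_num : (0:ℝ) < 2) p, pow_pos (by norm_num : (0:ℝ) < 3) p]
    have he : (p:ℝ) * (1 / (2 * (p:ℝ))) = 1/2 := by
      field_simp
    calc Real.sqrt 3 = ((3:ℝ) ^ p) ^ (1 / (2 * (p:ℝ))) := by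
          rw [← Real.rpow_natCast (3:ℝ) p, ← Real.rpow_mul (by norm_num), he,
            Real.sqrt_eq_rpow]
      _ ≤ _ := h1
  · filter_upwards [Filter.eventually_ge_atTop 1] with p hp
    have hppos : (0:ℝ) < (p:ℝ) := by exact_mod_cast hp
    have hexp : (0:ℝ) ≤ 1 / (2 * (p:ℝ)) := by positivity
    have h1 : ((2:ℝ) * (2 ^ p + 3 ^ p)) ^ (1 / (2 * (p:ℝ))) ≤ (4 * 3 ^ p) ^ (1 / (2 * (p:ℝ))) := by
      apply Real.rpow_le_rpow (by positivity) _ hexp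
      have : (2:ℝ) ^ p ≤ 3 ^ p := pow_le_pow_left₀ (by norm_num) (by norm_num) p
      nlinarith
    have he : (p:ℝ) * (1 / (2 * (p:ℝ))) = 1/2 := by
      field_simp
    calc (2 * ((2:ℝ) ^ p + 3 ^ p)) ^ (1 / (2 * (p:ℝ))) ≤ (4 * 3 ^ p) ^ (1 / (2 * (p:ℝ))) := h1
      _ = (4:ℝ) ^ (1 / (2 * (p:ℝ))) * Real.sqrt 3 := by
          rw [Real.mul_rpow (by norm_num) (by positivity)]
          congr 1
          rw [← Real.rpow_natCast (3:ℝ) p, ← Real.rpow_mul (by norm_num), he,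
            Real.sqrt_eq_rpow]
end

section
/- The sequence (Tr[B_p^4])^{1/(4p)} converges to ((7+√33)/2)^{1/4} as p → ∞ (the limit taken over real numbers), where B_p = A_p + A_p^T. -/
open Matrix

/- ## Auxiliary trace lemmas -/

lemma trace_fromBlocks'_s12 {m n R : Type*} [Fintype m] [Fintype n] [AddCommMonoid R]
    (a : Matrix m m R) (b : Matrix m n R) (c : Matrix n m R) (d : Matrix n n R) :
    trace (fromBlocks a b c d) = trace a + trace d := by
  simp [Matrix.trace, Fintype.sum_sum_type, Matrix.diag]

section Generic
variable {n : Type*} [Fintype n]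

lemma tr_cyc (a b c d : Matrix n n ℤ) : trace (a*b*c*d) = trace (b*c*d*a) := by
  rw [show a*b*c*d = a*(b*c*d) by noncomm_ring, trace_mul_comm]

lemma tr_rev (a b c d : Matrix n n ℤ) : trace (a*b*c*d) = trace (dᵀ*cᵀ*bᵀ*aᵀ) := by
  rw [← trace_transpose (a*b*c*d)]
  simp [transpose_mul, mul_assoc]

lemma key1 (X : Matrix n n ℤ) :
    trace ((fromBlocks X Xᵀ 0 X : Matrix (n ⊕ n) (n ⊕ n) ℤ) * fromBlocks X Xᵀ 0 X *
      fromBlocks X Xᵀ 0 X * fromBlocks X Xᵀ 0 X) = 2 * trace (X*X*X*X) := by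
  simp [fromBlocks_multiply, trace_fromBlocks'_s12, Matrix.add_mul, Matrix.mul_add, trace_add]
  ring

lemma key2 (X : Matrix n n ℤ) :
    trace ((fromBlocks X Xᵀ 0 X : Matrix (n ⊕ n) (n ⊕ n) ℤ) * fromBlocks X Xᵀ 0 X *
      fromBlocks X Xᵀ 0 X * (fromBlocks X Xᵀ 0 X)ᵀ) = 5 * trace (X*X*X*Xᵀ) := by
  simp [fromBlocks_transpose, fromBlocks_multiply, trace_fromBlocks'_s12, Matrix.add_mul,
    Matrix.mul_add, trace_add]
  linear_combination tr_cyc X X Xᵀ X + 2 * tr_cyc X Xᵀ X X + 3 * tr_cyc Xᵀ X X X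

lemma key3 (X : Matrix n n ℤ) :
    trace ((fromBlocks X Xᵀ 0 X : Matrix (n ⊕ n) (n ⊕ n) ℤ) * fromBlocks X Xᵀ 0 X *
      (fromBlocks X Xᵀ 0 X)ᵀ * (fromBlocks X Xᵀ 0 X)ᵀ) =
      4 * trace (X*X*Xᵀ*Xᵀ) + 2 * trace (X*Xᵀ*X*Xᵀ) := by
  simp [fromBlocks_transpose, fromBlocks_multiply, trace_fromBlocks'_s12, Matrix.add_mul,
    Matrix.mul_add, trace_add]
  linear_combination 2 * tr_cyc Xᵀ X X Xᵀ + tr_cyc X Xᵀ Xᵀ X + tr_cyc Xᵀ X Xᵀ X +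
    tr_cyc Xᵀ Xᵀ X X

lemma key4 (X : Matrix n n ℤ) :
    trace ((fromBlocks X Xᵀ 0 X : Matrix (n ⊕ n) (n ⊕ n) ℤ) * (fromBlocks X Xᵀ 0 X)ᵀ *
      fromBlocks X Xᵀ 0 X * (fromBlocks X Xᵀ 0 X)ᵀ) =
      4 * trace (X*X*Xᵀ*Xᵀ) + 3 * trace (X*Xᵀ*X*Xᵀ) := by
  simp [fromBlocks_transpose, fromBlocks_multiply, trace_fromBlocks'_s12, Matrix.add_mul,
    Matrix.mul_add, trace_add]
  linear_combination 3 * tr_cyc Xᵀ X X Xᵀ + tr_cyc X Xᵀ Xᵀ X + tr_cyc Xᵀ X Xᵀ X +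
    2 * tr_cyc Xᵀ Xᵀ X X

lemma keyB [DecidableEq n] (X : Matrix n n ℤ) :
    trace ((X + Xᵀ)^4) = 2 * trace (X*X*X*X) + 8 * trace (X*X*X*Xᵀ)
      + 4 * trace (X*X*Xᵀ*Xᵀ) + 2 * trace (X*Xᵀ*X*Xᵀ) := by
  have cXXYX : trace (X*X*Xᵀ*X) = trace (X*X*X*Xᵀ) := by rw [tr_cyc, tr_cyc, tr_cyc]
  have cXYXX : trace (X*Xᵀ*X*X) = trace (X*X*X*Xᵀ) := by rw [tr_cyc, tr_cyc]
  have cYXXX : trace (Xᵀ*X*X*X) = trace (X*X*X*Xᵀ) := by rw [tr_cyc]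
  have cXYYY : trace (X*Xᵀ*Xᵀ*Xᵀ) = trace (X*X*X*Xᵀ) := by rw [tr_rev]; simp [mul_assoc]
  have cYXYY : trace (Xᵀ*X*Xᵀ*Xᵀ) = trace (X*X*X*Xᵀ) := by rw [tr_cyc]; exact cXYYY
  have cYYXY : trace (Xᵀ*Xᵀ*X*Xᵀ) = trace (X*X*X*Xᵀ) := by rw [tr_cyc]; exact cYXYY
  have cYYYX : trace (Xᵀ*Xᵀ*Xᵀ*X) = trace (X*X*X*Xᵀ) := by rw [tr_cyc]; exact cYYXY
  have cXYYX : trace (X*Xᵀ*Xᵀ*X) = trace (X*X*Xᵀ*Xᵀ) := by rw [tr_cyc, tr_cyc, tr_cyc]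
  have cYYXX : trace (Xᵀ*Xᵀ*X*X) = trace (X*X*Xᵀ*Xᵀ) := by rw [tr_cyc, tr_cyc]
  have cYXXY : trace (Xᵀ*X*X*Xᵀ) = trace (X*X*Xᵀ*Xᵀ) := by rw [tr_cyc]
  have cYXYX : trace (Xᵀ*X*Xᵀ*X) = trace (X*Xᵀ*X*Xᵀ) := by rw [tr_cyc]
  have cYYYY : trace (Xᵀ*Xᵀ*Xᵀ*Xᵀ) = trace (X*X*X*X) := by rw [tr_rev]; simp [mul_assoc]
  have hexp : (X + Xᵀ)^4 = (X+Xᵀ)*(X+Xᵀ)*(X+Xᵀ)*(X+Xᵀ) := by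
    rw [pow_succ, pow_succ, pow_succ, pow_one]
  rw [hexp]
  simp only [Matrix.add_mul, Matrix.mul_add, trace_add]
  linear_combination cXXYX + cXYXX + cYXXX + cXYYY + cYXYY + cYYXY + cYYYX + cXYYX +
    cYYXX + cYXXY + cYXYX + cYYYY

end Generic

/- ## Trace sequences -/

lemma trA4 (p : ℕ) : trace (A p * A p * A p * A p) = 2^p := by
  induction p with
  | zero => decide
  | succ p ih =>
    have h : trace (A (p+1) * A (p+1) * A (p+1) * A (p+1)) =
        trace ((fromBlocks (A p) (A p)ᵀ 0 (A p) : Matrix (IdxA p ⊕ IdxA p) _ ℤ) *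
          fromBlocks (A p) (A p)ᵀ 0 (A p) * fromBlocks (A p) (A p)ᵀ 0 (A p) *
          fromBlocks (A p) (A p)ᵀ 0 (A p)) := rfl
    rw [h, key1, ih]; ring

lemma trA3Y (p : ℕ) : trace (A p * A p * A p * (A p)ᵀ) = 5^p := by
  induction p with
  | zero => decide
  | succ p ih =>
    have h : trace (A (p+1) * A (p+1) * A (p+1) * (A (p+1))ᵀ) =
        trace ((fromBlocks (A p) (A p)ᵀ 0 (A p) : Matrix (IdxA p ⊕ IdxA p) _ ℤ) *
          fromBlocks (A p) (A p)ᵀ 0 (A p) * fromBlocks (A p) (A p)ᵀ 0 (A p) *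
          (fromBlocks (A p) (A p)ᵀ 0 (A p))ᵀ) := rfl
    rw [h, key2, ih]; ring

def T3 (p : ℕ) : ℤ := trace (A p * A p * (A p)ᵀ * (A p)ᵀ)
def T4 (p : ℕ) : ℤ := trace (A p * (A p)ᵀ * A p * (A p)ᵀ)

lemma T3_succ (p : ℕ) : T3 (p+1) = 4 * T3 p + 2 * T4 p := by
  have h : T3 (p+1) =
      trace ((fromBlocks (A p) (A p)ᵀ 0 (A p) : Matrix (IdxA p ⊕ IdxA p) _ ℤ) *
        fromBlocks (A p) (A p)ᵀ 0 (A p) * (fromBlocks (A p) (A p)ᵀ 0 (A p))ᵀ *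
        (fromBlocks (A p) (A p)ᵀ 0 (A p))ᵀ) := rfl
  rw [h, key3]; rfl

lemma T4_succ (p : ℕ) : T4 (p+1) = 4 * T3 p + 3 * T4 p := by
  have h : T4 (p+1) =
      trace ((fromBlocks (A p) (A p)ᵀ 0 (A p) : Matrix (IdxA p ⊕ IdxA p) _ ℤ) *
        (fromBlocks (A p) (A p)ᵀ 0 (A p))ᵀ * fromBlocks (A p) (A p)ᵀ 0 (A p) *
        (fromBlocks (A p) (A p)ᵀ 0 (A p))ᵀ) := rfl
  rw [h, key4]; rfl

lemma T34_pos (p : ℕ) : 1 ≤ T3 p ∧ 1 ≤ T4 p := by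
  induction p with
  | zero => exact ⟨by decide, by decide⟩
  | succ p ih =>
    rw [T3_succ, T4_succ]
    exact ⟨by linarith [ih.1, ih.2], by linarith [ih.1, ih.2]⟩

lemma trB4_eq (p : ℕ) : trace ((B p)^4) = 2 * 2^p + 8 * 5^p + 4 * T3 p + 2 * T4 p := by
  have := keyB (A p)
  rw [show (B p) = A p + (A p)ᵀ from rfl, this, trA4, trA3Y]; rfl

/- ## Real asymptotics -/

noncomputable def Lam : ℝ := (7 + Real.sqrt 33) / 2

lemma sqrt33_sq : Real.sqrt 33 ^ 2 = 33 := Real.sq_sqrt (by norm_num)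

lemma sqrt33_bounds : 5 < Real.sqrt 33 ∧ Real.sqrt 33 < 6 := by
  constructor <;> nlinarith [sqrt33_sq, Real.sqrt_nonneg 33]

lemma Lam_bounds : 6 < Lam ∧ Lam < 7 := by
  unfold Lam; constructor <;> nlinarith [sqrt33_bounds.1, sqrt33_bounds.2]

noncomputable def Th : ℝ := (Lam - 4) / 4

lemma Th_bounds : 1/2 ≤ Th ∧ Th ≤ 1 := by
  unfold Th; constructor <;> nlinarith [Lam_bounds.1, Lam_bounds.2]

lemma Lam_quad : Lam ^ 2 = 7 * Lam - 4 := by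
  unfold Lam; nlinarith [sqrt33_sq]

noncomputable def g (p : ℕ) : ℝ := (T3 p : ℝ) + Th * (T4 p : ℝ)

lemma g_succ (p : ℕ) : g (p+1) = Lam * g p := by
  unfold g
  rw [T3_succ, T4_succ]
  push_cast
  have h1 : 4 + 4 * Th = Lam := by unfold Th; ring
  have h2 : 2 + 3 * Th = Lam * Th := by
    unfold Th; nlinarith [Lam_quad]
  linear_combination ((T3 p : ℝ)) * h1 + ((T4 p : ℝ)) * h2

lemma g_eq (p : ℕ) : g p = (1 + Th) * Lam ^ p := by
  induction p with
  | zero =>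
    have h3 : T3 0 = 1 := by decide
    have h4 : T4 0 = 1 := by decide
    unfold g; rw [h3, h4]; norm_num
  | succ p ih => rw [g_succ, ih, pow_succ]; ring

lemma trB4_bounds (p : ℕ) :
    Lam ^ p ≤ ((trace ((B p)^4) : ℤ) : ℝ) ∧ ((trace ((B p)^4) : ℤ) : ℝ) ≤ 32 * Lam ^ p := by
  have hQ := trB4_eq p
  have ht3 : (1:ℝ) ≤ (T3 p : ℝ) := by exact_mod_cast (T34_pos p).1
  have ht4 : (1:ℝ) ≤ (T4 p : ℝ) := by exact_mod_cast (T34_pos p).2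
  have hg : (T3 p : ℝ) + Th * (T4 p : ℝ) = (1 + Th) * Lam ^ p := g_eq p
  have hLpos : (0:ℝ) < Lam := by linarith [Lam_bounds.1]
  have hLp : (0:ℝ) < Lam ^ p := pow_pos hLpos p
  have h2p : (2:ℝ)^p ≤ Lam ^ p := pow_le_pow_left₀ (by norm_num) (by linarith [Lam_bounds.1]) p
  have h5p : (5:ℝ)^p ≤ Lam ^ p := pow_le_pow_left₀ (by norm_num) (by linarith [Lam_bounds.1]) p
  have h2p0 : (0:ℝ) < (2:ℝ)^p := by positivity
  have h5p0 : (0:ℝ) < (5:ℝ)^p := by positivity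
  have hcast : ((trace ((B p)^4) : ℤ) : ℝ) =
      2 * 2^p + 8 * 5^p + 4 * (T3 p : ℝ) + 2 * (T4 p : ℝ) := by
    rw [hQ]; push_cast; ring
  obtain ⟨hth1, hth2⟩ := Th_bounds
  constructor
  · rw [hcast]; nlinarith [hg, ht3, ht4]
  · rw [hcast]; nlinarith [hg, ht3, ht4]

lemma Lam_pos : (0:ℝ) < Lam := by linarith [Lam_bounds.1]

lemma exp_tendsto : Filter.Tendsto (fun p : ℕ => 1 / (4 * (p:ℝ))) Filter.atTop (nhds 0) := by
  have h : (fun p : ℕ => 1 / (4 * (p:ℝ))) = fun p : ℕ => (1/4 : ℝ) * (1 / (p:ℝ)) := by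
    funext p; ring
  rw [h]
  simpa using tendsto_one_div_atTop_nhds_zero_nat.const_mul (1/4 : ℝ)

theorem trace_B_fourth_root_tendsto :
    Filter.Tendsto
      (fun p : ℕ => ((Matrix.trace ((B p) ^ 4) : ℤ) : ℝ) ^ (1 / (4 * (p : ℝ))))
      Filter.atTop (nhds (((7 + Real.sqrt 33) / 2) ^ ((1 : ℝ) / 4))) := by
  have hL0 : (0:ℝ) ≤ Lam := Lam_pos.le
  have hshow : (((7 + Real.sqrt 33) / 2 : ℝ) ^ ((1 : ℝ) / 4)) = Lam ^ ((1:ℝ)/4) := rfl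
  rw [hshow]
  have hup : Filter.Tendsto (fun p : ℕ => (32:ℝ) ^ (1 / (4 * (p:ℝ))) * Lam ^ ((1:ℝ)/4))
      Filter.atTop (nhds (Lam ^ ((1:ℝ)/4))) := by
    have t1 : Filter.Tendsto (fun p : ℕ => (32:ℝ) ^ (1 / (4 * (p:ℝ)))) Filter.atTop
        (nhds 1) := by
      have := (tendsto_const_nhds (x := (32:ℝ)) (f := Filter.atTop (α := ℕ))).rpow
        exp_tendsto (Or.inl (by norm_num))
      simpa using this
    simpa using t1.mul_const (Lam ^ ((1:ℝ)/4))
  refine tendsto_of_tendsto_of_tendsto_of_le_of_le' tendsto_const_nhds hup ?_ ?_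
  · filter_upwards [Filter.eventually_ge_atTop 1] with p hp
    have hpne : (p:ℝ) ≠ 0 := Nat.cast_ne_zero.mpr (by omega)
    have he : (0:ℝ) ≤ 1 / (4 * (p:ℝ)) := by positivity
    have hb := (trB4_bounds p).1
    have key : (Lam ^ p) ^ (1 / (4 * (p:ℝ))) = Lam ^ ((1:ℝ)/4) := by
      rw [← Real.rpow_natCast Lam p, ← Real.rpow_mul hL0]
      congr 1
      field_simp
    calc Lam ^ ((1:ℝ)/4) = (Lam ^ p) ^ (1 / (4 * (p:ℝ))) := key.symm
      _ ≤ ((Matrix.trace ((B p) ^ 4) : ℤ) : ℝ) ^ (1 / (4 * (p:ℝ))) :=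
        Real.rpow_le_rpow (by positivity) hb he
  · filter_upwards [Filter.eventually_ge_atTop 1] with p hp
    have hpne : (p:ℝ) ≠ 0 := Nat.cast_ne_zero.mpr (by omega)
    have he : (0:ℝ) ≤ 1 / (4 * (p:ℝ)) := by positivity
    have hb := (trB4_bounds p).2
    have htr0 : (0:ℝ) ≤ ((Matrix.trace ((B p) ^ 4) : ℤ) : ℝ) := by
      have := (trB4_bounds p).1
      have := pow_pos Lam_pos p
      linarith
    have key : (Lam ^ p) ^ (1 / (4 * (p:ℝ))) = Lam ^ ((1:ℝ)/4) := by
      rw [← Real.rpow_natCast Lam p, ← Real.rpow_mul hL0]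
      congr 1
      field_simp
    calc ((Matrix.trace ((B p) ^ 4) : ℤ) : ℝ) ^ (1 / (4 * (p:ℝ)))
        ≤ (32 * Lam ^ p) ^ (1 / (4 * (p:ℝ))) := Real.rpow_le_rpow htr0 hb he
      _ = (32:ℝ) ^ (1 / (4 * (p:ℝ))) * (Lam ^ p) ^ (1 / (4 * (p:ℝ))) :=
        Real.mul_rpow (by norm_num) (by positivity)
      _ = (32:ℝ) ^ (1 / (4 * (p:ℝ))) * Lam ^ ((1:ℝ)/4) := by rw [key]
end
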